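/- arXiv:2505.02962 — 5 statements merged into one kernel-verified Lean document; each statement's English description precedes it below -/
import Mathlib

section
/- Let ε ∈ {1, −1} and let Ω := {(z₁,z₂) ∈ ℝ² : 2z₂ < z₁²}. Then the function h(z₁,z₂) := ε·(z₁² − 2z₂)^{1/2} + z₁ is a smooth solution of the inviscid Burgers equation ∂₁h + h·∂₂h = 0 on Ω, and the function w(z₁,z₂) := ε·(1/15)(z₁² − 2z₂)^{5/2} + ½z₁z₂² is a smooth solution of the reduced equation ∂₁∂₂²w + (∂₂²w)·(∂₂³w) = 0 on Ω. -/
/-- First-coordinate partial derivative of a function on `ℝ²`. -/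
noncomputable def d1 (f : ℝ × ℝ → ℝ) (p : ℝ × ℝ) : ℝ := deriv (fun s => f (s, p.2)) p.1

/-- Second-coordinate partial derivative of a function on `ℝ²`. -/
noncomputable def d2 (f : ℝ × ℝ → ℝ) (p : ℝ × ℝ) : ℝ := deriv (fun s => f (p.1, s)) p.2

/-- `w` is a smooth solution of the reduced equation `∂₁∂₂²w + (∂₂²w)·(∂₂³w) = 0` on `U`. -/
def IsRedSolOn (w : ℝ × ℝ → ℝ) (U : Set (ℝ × ℝ)) : Prop :=
  ContDiffOn ℝ (⊤ : ℕ∞) w U ∧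
    ∀ p ∈ U, d1 (d2 (d2 w)) p + d2 (d2 w) p * d2 (d2 (d2 w)) p = 0

/-- `h` is a smooth solution of the inviscid Burgers equation `∂₁h + h·∂₂h = 0` on `U`. -/
def IsBurgersSolOn (h : ℝ × ℝ → ℝ) (U : Set (ℝ × ℝ)) : Prop :=
  ContDiffOn ℝ (⊤ : ℕ∞) h U ∧ ∀ p ∈ U, d1 h p + h p * d2 h p = 0

open Real Filter Topology

private lemma stU_open : IsOpen {p : ℝ × ℝ | 2 * p.2 < p.1 ^ 2} :=
  isOpen_lt (by fun_prop) (by fun_prop)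

private lemma st_pos {p : ℝ × ℝ} (hp : p ∈ {p : ℝ × ℝ | 2 * p.2 < p.1 ^ 2}) :
    0 < p.1 ^ 2 - 2 * p.2 := by
  simp only [Set.mem_setOf_eq] at hp; linarith

private lemma st_sqrt_ne {p : ℝ × ℝ} (hp : p ∈ {p : ℝ × ℝ | 2 * p.2 < p.1 ^ 2}) :
    Real.sqrt (p.1 ^ 2 - 2 * p.2) ≠ 0 :=
  ne_of_gt (Real.sqrt_pos.mpr (st_pos hp))

private lemma hasDerivAt_S1 (x y : ℝ) (h : 0 < x ^ 2 - 2 * y) :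
    HasDerivAt (fun s => Real.sqrt (s ^ 2 - 2 * y))
      (x / Real.sqrt (x ^ 2 - 2 * y)) x := by
  have h1 : HasDerivAt (fun s : ℝ => s ^ 2 - 2 * y) (2 * x) x := by
    simpa using ((hasDerivAt_pow 2 x).sub_const (2 * y))
  have h2 := h1.sqrt (ne_of_gt h)
  convert h2 using 1
  have hs : Real.sqrt (x ^ 2 - 2 * y) ≠ 0 := ne_of_gt (Real.sqrt_pos.mpr h)
  field_simp

private lemma hasDerivAt_S2 (x y : ℝ) (h : 0 < x ^ 2 - 2 * y) :
    HasDerivAt (fun s => Real.sqrt (x ^ 2 - 2 * s))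
      (-(Real.sqrt (x ^ 2 - 2 * y))⁻¹) y := by
  have h1 : HasDerivAt (fun s : ℝ => x ^ 2 - 2 * s) (-2) y := by
    simpa using ((hasDerivAt_id y).const_mul 2).const_sub (x ^ 2)
  have h2 := h1.sqrt (ne_of_gt h)
  convert h2 using 1
  have hs : Real.sqrt (x ^ 2 - 2 * y) ≠ 0 := ne_of_gt (Real.sqrt_pos.mpr h)
  field_simp

section main
variable (ε : ℝ)

private noncomputable def hfun : ℝ × ℝ → ℝ :=
  fun p => ε * Real.sqrt (p.1 ^ 2 - 2 * p.2) + p.1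

private noncomputable def wfun : ℝ × ℝ → ℝ :=
  fun p => ε * (1 / 15) * (Real.sqrt (p.1 ^ 2 - 2 * p.2)) ^ 5 + (1 / 2) * p.1 * p.2 ^ 2

private lemma d1h {p : ℝ × ℝ} (hp : p ∈ {p : ℝ × ℝ | 2 * p.2 < p.1 ^ 2}) :
    d1 (hfun ε) p = ε * (p.1 / Real.sqrt (p.1 ^ 2 - 2 * p.2)) + 1 := by
  have hd : HasDerivAt (fun s => hfun ε (s, p.2))
      (ε * (p.1 / Real.sqrt (p.1 ^ 2 - 2 * p.2)) + 1) p.1 := by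
    exact ((hasDerivAt_S1 p.1 p.2 (st_pos hp)).const_mul ε).add (hasDerivAt_id p.1)
  exact hd.deriv

private lemma d2h {p : ℝ × ℝ} (hp : p ∈ {p : ℝ × ℝ | 2 * p.2 < p.1 ^ 2}) :
    d2 (hfun ε) p = ε * -(Real.sqrt (p.1 ^ 2 - 2 * p.2))⁻¹ := by
  have hd : HasDerivAt (fun s => hfun ε (p.1, s))
      (ε * -(Real.sqrt (p.1 ^ 2 - 2 * p.2))⁻¹) p.2 := by
    exact ((hasDerivAt_S2 p.1 p.2 (st_pos hp)).const_mul ε).add_const p.1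
  exact hd.deriv

private lemma d2w {p : ℝ × ℝ} (hp : p ∈ {p : ℝ × ℝ | 2 * p.2 < p.1 ^ 2}) :
    d2 (wfun ε) p = -(ε / 3) * (Real.sqrt (p.1 ^ 2 - 2 * p.2)) ^ 3 + p.1 * p.2 := by
  have hS := st_sqrt_ne hp
  have hd : HasDerivAt (fun s => wfun ε (p.1, s))
      (ε * (1 / 15) * (5 * (Real.sqrt (p.1 ^ 2 - 2 * p.2)) ^ 4 *
        -(Real.sqrt (p.1 ^ 2 - 2 * p.2))⁻¹) + (1 / 2) * p.1 * (2 * p.2)) p.2 := by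
    refine HasDerivAt.add ?_ ?_
    · have := ((hasDerivAt_S2 p.1 p.2 (st_pos hp)).pow 5).const_mul (ε * (1 / 15))
      simpa [mul_comm, mul_assoc, mul_left_comm] using this
    · simpa using (hasDerivAt_pow 2 p.2).const_mul ((1 / 2) * p.1)
  rw [d2, hd.deriv]
  field_simp
  ring

private lemma d22w {p : ℝ × ℝ} (hp : p ∈ {p : ℝ × ℝ | 2 * p.2 < p.1 ^ 2}) :
    d2 (d2 (wfun ε)) p = hfun ε p := by
  have hS := st_sqrt_ne hp
  have hev : ∀ᶠ s in 𝓝 p.2, (p.1, s) ∈ {p : ℝ × ℝ | 2 * p.2 < p.1 ^ 2} :=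
    (stU_open.preimage (Continuous.prodMk_right p.1)).eventually_mem hp
  have heq : (fun s => d2 (wfun ε) (p.1, s)) =ᶠ[𝓝 p.2]
      (fun s => -(ε / 3) * (Real.sqrt (p.1 ^ 2 - 2 * s)) ^ 3 + p.1 * s) :=
    hev.mono fun s hs => d2w ε hs
  rw [d2, heq.deriv_eq]
  have hd : HasDerivAt (fun s => -(ε / 3) * (Real.sqrt (p.1 ^ 2 - 2 * s)) ^ 3 + p.1 * s)
      (-(ε / 3) * (3 * (Real.sqrt (p.1 ^ 2 - 2 * p.2)) ^ 2 *
        -(Real.sqrt (p.1 ^ 2 - 2 * p.2))⁻¹) + p.1 * 1) p.2 := by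
    refine HasDerivAt.add ?_ ?_
    · have := ((hasDerivAt_S2 p.1 p.2 (st_pos hp)).pow 3).const_mul (-(ε / 3))
      simpa [mul_comm, mul_assoc, mul_left_comm] using this
    · simpa using (hasDerivAt_id p.2).const_mul p.1
  rw [hd.deriv, hfun]
  field_simp

private lemma d222w {p : ℝ × ℝ} (hp : p ∈ {p : ℝ × ℝ | 2 * p.2 < p.1 ^ 2}) :
    d2 (d2 (d2 (wfun ε))) p = ε * -(Real.sqrt (p.1 ^ 2 - 2 * p.2))⁻¹ := by
  have hev : ∀ᶠ s in 𝓝 p.2, (p.1, s) ∈ {p : ℝ × ℝ | 2 * p.2 < p.1 ^ 2} :=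
    (stU_open.preimage (Continuous.prodMk_right p.1)).eventually_mem hp
  have heq : (fun s => d2 (d2 (wfun ε)) (p.1, s)) =ᶠ[𝓝 p.2] (fun s => hfun ε (p.1, s)) :=
    hev.mono fun s hs => d22w ε hs
  rw [d2, heq.deriv_eq]
  exact d2h ε hp

private lemma d1d22w {p : ℝ × ℝ} (hp : p ∈ {p : ℝ × ℝ | 2 * p.2 < p.1 ^ 2}) :
    d1 (d2 (d2 (wfun ε))) p = ε * (p.1 / Real.sqrt (p.1 ^ 2 - 2 * p.2)) + 1 := by
  have hev : ∀ᶠ s in 𝓝 p.1, (s, p.2) ∈ {p : ℝ × ℝ | 2 * p.2 < p.1 ^ 2} :=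
    (stU_open.preimage (continuous_id.prodMk continuous_const)).eventually_mem hp
  have heq : (fun s => d2 (d2 (wfun ε)) (s, p.2)) =ᶠ[𝓝 p.1] (fun s => hfun ε (s, p.2)) :=
    hev.mono fun s hs => d22w ε hs
  rw [d1, heq.deriv_eq]
  exact d1h ε hp

private lemma smooth_inner : ContDiff ℝ (⊤ : ℕ∞) (fun p : ℝ × ℝ => p.1 ^ 2 - 2 * p.2) := by
  fun_prop

private lemma smooth_sqrt {p : ℝ × ℝ} (hp : p ∈ {p : ℝ × ℝ | 2 * p.2 < p.1 ^ 2}) :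
    ContDiffAt ℝ (⊤ : ℕ∞) (fun p : ℝ × ℝ => Real.sqrt (p.1 ^ 2 - 2 * p.2)) p :=
  (Real.contDiffAt_sqrt (ne_of_gt (st_pos hp))).comp p smooth_inner.contDiffAt

end main

/-- Solutions obtained by reduction 1.3: the solution
`h = ε(z₁² − 2z₂)^{1/2} + z₁` of the inviscid Burgers equation and the solution
`w = ε(1/15)(z₁² − 2z₂)^{5/2} + ½z₁z₂²` of the reduced equation on `{2z₂ < z₁²}`. -/
theorem statement15 (ε : ℝ) (hε : ε = 1 ∨ ε = -1) :
    IsBurgersSolOn (fun p => ε * Real.sqrt (p.1 ^ 2 - 2 * p.2) + p.1)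
      {p : ℝ × ℝ | 2 * p.2 < p.1 ^ 2} ∧
    IsRedSolOn (fun p => ε * (1 / 15) * (Real.sqrt (p.1 ^ 2 - 2 * p.2)) ^ 5
        + (1 / 2) * p.1 * p.2 ^ 2)
      {p : ℝ × ℝ | 2 * p.2 < p.1 ^ 2} := by
  have key : ∀ p ∈ {p : ℝ × ℝ | 2 * p.2 < p.1 ^ 2},
      (ε * (p.1 / Real.sqrt (p.1 ^ 2 - 2 * p.2)) + 1) +
        (ε * Real.sqrt (p.1 ^ 2 - 2 * p.2) + p.1) *
          (ε * -(Real.sqrt (p.1 ^ 2 - 2 * p.2))⁻¹) = 0 := by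
    intro p hp
    have hS := st_sqrt_ne hp
    rcases hε with rfl | rfl <;> field_simp <;> ring
  constructor
  · constructor
    · intro p hp
      exact ((contDiffAt_const.mul (smooth_sqrt hp)).add contDiffAt_fst).contDiffWithinAt
    · intro p hp
      rw [show (fun p : ℝ × ℝ => ε * Real.sqrt (p.1 ^ 2 - 2 * p.2) + p.1) = hfun ε from rfl,
        d1h ε hp, d2h ε hp]
      exact key p hp
  · constructor
    · intro p hp
      refine ContDiffAt.contDiffWithinAt ?_
      exact (contDiffAt_const.mul ((smooth_sqrt hp).pow 5)).add
        ((contDiffAt_const.mul contDiffAt_fst).mul (contDiffAt_snd.pow 2))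
    · intro p hp
      rw [show (fun p : ℝ × ℝ => ε * (1 / 15) * (Real.sqrt (p.1 ^ 2 - 2 * p.2)) ^ 5
          + (1 / 2) * p.1 * p.2 ^ 2) = wfun ε from rfl,
        d1d22w ε hp, d22w ε hp, d222w ε hp]
      exact key p hp
end

section
/- Let Ω := {(z₁,z₂) ∈ ℝ² : z₁ ≠ 0 and z₂² + z₁ > 0} and write S := (z₂² + z₁)^{1/2}. Then the function h(z₁,z₂) := (z₂ + S)/(2z₁) is a smooth solution of the inviscid Burgers equation ∂₁h + h·∂₂h = 0 on Ω, and the function w(z₁,z₂) := (z₂³ + S³)/(12z₁) + (z₂/4)·log|z₂ + S| − (1/4)S is a smooth solution of the reduced equation ∂₁∂₂²w + (∂₂²w)·(∂₂³w) = 0 on Ω (note that z₂ + S ≠ 0 on Ω). -/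
noncomputable def S16 (p : ℝ × ℝ) : ℝ := Real.sqrt (p.2 ^ 2 + p.1)
noncomputable def H16 (p : ℝ × ℝ) : ℝ := (p.2 + S16 p) / (2 * p.1)
noncomputable def V16 (p : ℝ × ℝ) : ℝ :=
  p.2 * (p.2 + S16 p) / (4 * p.1) + (1 / 4) * Real.log (p.2 + S16 p)
noncomputable def W16 (p : ℝ × ℝ) : ℝ :=
  (p.2 ^ 3 + (S16 p) ^ 3) / (12 * p.1) + p.2 / 4 * Real.log (p.2 + S16 p)
    - (1 / 4) * S16 p

section
variable {x y s : ℝ}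

lemma aux_facts (hx : x ≠ 0) (hs : 0 < s) (hs2 : s ^ 2 = y ^ 2 + x) :
    y + s ≠ 0 := by
  intro h; have : s = -y := by linarith
  apply hx; nlinarith

lemma sqrt_eq (hs : 0 < s) (hs2 : s ^ 2 = y ^ 2 + x) :
    Real.sqrt (y ^ 2 + x) = s := by
  rw [← hs2]; exact Real.sqrt_sq hs.le

lemma hdS_y (hs : 0 < s) (hs2 : s ^ 2 = y ^ 2 + x) :
    HasDerivAt (fun t => Real.sqrt (t ^ 2 + x)) (y / s) y := by
  have hpos : 0 < y ^ 2 + x := by nlinarith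
  have h1 : HasDerivAt (fun t : ℝ => t ^ 2 + x) (2 * y) y := by
    simpa using (hasDerivAt_pow 2 y).add_const x
  have h2 := (Real.hasDerivAt_sqrt (ne_of_gt hpos)).comp y h1
  rw [sqrt_eq hs hs2] at h2
  refine h2.congr_deriv (Eq.symm ?_); field_simp

lemma hdS_x (hs : 0 < s) (hs2 : s ^ 2 = y ^ 2 + x) :
    HasDerivAt (fun u => Real.sqrt (y ^ 2 + u)) (1 / (2 * s)) x := by
  have hpos : 0 < y ^ 2 + x := by nlinarith
  have h1 : HasDerivAt (fun u : ℝ => y ^ 2 + u) 1 x := by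
    simpa using (hasDerivAt_id x).const_add (y ^ 2)
  have h2 := (Real.hasDerivAt_sqrt (ne_of_gt hpos)).comp x h1
  rw [sqrt_eq hs hs2] at h2
  exact h2.congr_deriv (mul_one _)

lemma hdLog_y (hx : x ≠ 0) (hs : 0 < s) (hs2 : s ^ 2 = y ^ 2 + x) :
    HasDerivAt (fun t => Real.log (t + Real.sqrt (t ^ 2 + x)))
      ((y + s)⁻¹ * (1 + y / s)) y := by
  have hys := aux_facts hx hs hs2
  have h1 : HasDerivAt (fun t => t + Real.sqrt (t ^ 2 + x)) (1 + y / s) y :=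
    (hasDerivAt_id y).add (hdS_y hs hs2)
  have h2 := (Real.hasDerivAt_log (by rw [sqrt_eq hs hs2]; exact hys)).comp y h1
  rw [sqrt_eq hs hs2] at h2
  exact h2

-- A : d2 W = V
lemma lemA (hx : x ≠ 0) (hs : 0 < s) (hs2 : s ^ 2 = y ^ 2 + x) :
    HasDerivAt (fun t => W16 (x, t)) (V16 (x, y)) y := by
  have hys := aux_facts hx hs hs2
  have hsq := sqrt_eq (x := x) (y := y) hs hs2
  have hA : HasDerivAt (fun t : ℝ => (t ^ 3 + (Real.sqrt (t ^ 2 + x)) ^ 3) / (12 * x))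
      ((3 * y ^ 2 + 3 * s ^ 2 * (y / s)) / (12 * x)) y := by
    have := ((hasDerivAt_pow 3 y).add ((hdS_y hs hs2).pow 3)).div_const (12 * x)
    rw [hsq] at this
    refine this.congr_deriv (Eq.symm ?_); norm_num
  have hB : HasDerivAt (fun t : ℝ => t / 4 * Real.log (t + Real.sqrt (t ^ 2 + x)))
      (1 / 4 * Real.log (y + s) + y / 4 * ((y + s)⁻¹ * (1 + y / s))) y := by
    have h1 : HasDerivAt (fun t : ℝ => t / 4) (1 / 4) y := by
      simpa using (hasDerivAt_id y).div_const 4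
    have := h1.mul (hdLog_y hx hs hs2)
    rw [hsq] at this
    exact this
  have hC : HasDerivAt (fun t : ℝ => (1 / 4) * Real.sqrt (t ^ 2 + x))
      ((1 / 4) * (y / s)) y := (hdS_y hs hs2).const_mul (1 / 4)
  have := (hA.add hB).sub hC
  have heq : (fun t => W16 (x, t)) = fun t =>
      (t ^ 3 + (Real.sqrt (t ^ 2 + x)) ^ 3) / (12 * x)
        + t / 4 * Real.log (t + Real.sqrt (t ^ 2 + x)) - (1 / 4) * Real.sqrt (t ^ 2 + x) := by
    funext t; simp [W16, S16]
  rw [heq]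
  refine this.congr_deriv (Eq.symm ?_)
  simp only [V16, S16, hsq]
  have hx' : x = s ^ 2 - y ^ 2 := by linarith
  subst hx'
  have hx2 : s ^ 2 - y ^ 2 ≠ 0 := hx
  field_simp
  ring

-- B : d2 V = H
lemma lemB (hx : x ≠ 0) (hs : 0 < s) (hs2 : s ^ 2 = y ^ 2 + x) :
    HasDerivAt (fun t => V16 (x, t)) (H16 (x, y)) y := by
  have hys := aux_facts hx hs hs2
  have hsq := sqrt_eq (x := x) (y := y) hs hs2
  have hA : HasDerivAt (fun t : ℝ => t * (t + Real.sqrt (t ^ 2 + x)) / (4 * x))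
      ((1 * (y + s) + y * (1 + y / s)) / (4 * x)) y := by
    have := ((hasDerivAt_id y).mul ((hasDerivAt_id y).add (hdS_y hs hs2))).div_const (4 * x)
    refine this.congr_deriv ?_; simp [hsq]
  have hB := (hdLog_y hx hs hs2).const_mul (1 / 4 : ℝ)
  have := hA.add hB
  have heq : (fun t => V16 (x, t)) = fun t =>
      t * (t + Real.sqrt (t ^ 2 + x)) / (4 * x) + (1/4) * Real.log (t + Real.sqrt (t ^ 2 + x)) := by
    funext t; simp [V16, S16]
  rw [heq]
  refine this.congr_deriv (Eq.symm ?_)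
  simp only [H16, S16, hsq]
  have hx' : x = s ^ 2 - y ^ 2 := by linarith
  subst hx'
  have hx2 : s ^ 2 - y ^ 2 ≠ 0 := hx
  field_simp
  ring

-- C : d2 H
lemma lemC (hx : x ≠ 0) (hs : 0 < s) (hs2 : s ^ 2 = y ^ 2 + x) :
    HasDerivAt (fun t => H16 (x, t)) ((y + s) / (2 * x * s)) y := by
  have := ((hasDerivAt_id y).add (hdS_y hs hs2)).div_const (2 * x)
  have heq : (fun t => H16 (x, t)) = fun t =>
      (t + Real.sqrt (t ^ 2 + x)) / (2 * x) := by
    funext t; simp [H16, S16]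
  rw [heq]
  refine this.congr_deriv (Eq.symm ?_)
  field_simp
  ring

-- D : d1 H
lemma lemD (hx : x ≠ 0) (hs : 0 < s) (hs2 : s ^ 2 = y ^ 2 + x) :
    HasDerivAt (fun u => H16 (u, y)) (1 / (4 * x * s) - (y + s) / (2 * x ^ 2)) x := by
  have hnum : HasDerivAt (fun u : ℝ => y + Real.sqrt (y ^ 2 + u)) (1 / (2 * s)) x := by
    simpa using (hdS_x hs hs2).const_add y
  have hden : HasDerivAt (fun u : ℝ => 2 * u) 2 x := by
    simpa using (hasDerivAt_id x).const_mul 2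
  have := hnum.div hden (by simpa using hx)
  have heq : (fun u => H16 (u, y)) = fun u =>
      (y + Real.sqrt (y ^ 2 + u)) / (2 * u) := by
    funext u; simp [H16, S16]
  rw [heq]
  refine this.congr_deriv (Eq.symm ?_)
  rw [sqrt_eq hs hs2]
  field_simp
  ring

-- Burgers identity
lemma lemE (hx : x ≠ 0) (hs : 0 < s) (hs2 : s ^ 2 = y ^ 2 + x) :
    (1 / (4 * x * s) - (y + s) / (2 * x ^ 2)) + H16 (x, y) * ((y + s) / (2 * x * s)) = 0 := by
  simp only [H16, S16, sqrt_eq hs hs2]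
  have hx' : x = s ^ 2 - y ^ 2 := by linarith
  subst hx'
  have hx2 : s ^ 2 - y ^ 2 ≠ 0 := hx
  field_simp
  ring

end

open Filter Topology


/-- Solutions obtained by reduction 1.6^{1/2}: the solution
`h = (z₂ + √(z₂² + z₁))/(2z₁)` of the inviscid Burgers equation and the corresponding
solution `w` of the reduced equation on `Ω = {z₁ ≠ 0, z₂² + z₁ > 0}`. -/
theorem statement16 :
    (∀ p : ℝ × ℝ, p.1 ≠ 0 → 0 < p.2 ^ 2 + p.1 → p.2 + Real.sqrt (p.2 ^ 2 + p.1) ≠ 0) ∧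
    IsBurgersSolOn (fun p => (p.2 + Real.sqrt (p.2 ^ 2 + p.1)) / (2 * p.1))
      {p : ℝ × ℝ | p.1 ≠ 0 ∧ 0 < p.2 ^ 2 + p.1} ∧
    IsRedSolOn (fun p =>
        (p.2 ^ 3 + (Real.sqrt (p.2 ^ 2 + p.1)) ^ 3) / (12 * p.1)
          + p.2 / 4 * Real.log |p.2 + Real.sqrt (p.2 ^ 2 + p.1)|
          - (1 / 4) * Real.sqrt (p.2 ^ 2 + p.1))
      {p : ℝ × ℝ | p.1 ≠ 0 ∧ 0 < p.2 ^ 2 + p.1} := by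
  set Ω : Set (ℝ × ℝ) := {p : ℝ × ℝ | p.1 ≠ 0 ∧ 0 < p.2 ^ 2 + p.1} with hΩdef
  have hΩ : IsOpen Ω := by
    apply IsOpen.and
    · exact isOpen_compl_singleton.preimage continuous_fst
    · exact isOpen_Ioi.preimage ((continuous_snd.pow 2).add continuous_fst)
  -- basic facts at a point of Ω
  have hne : ∀ p : ℝ × ℝ, p.1 ≠ 0 → 0 < p.2 ^ 2 + p.1 →
      p.2 + Real.sqrt (p.2 ^ 2 + p.1) ≠ 0 := fun p hx hpos =>
    aux_facts hx (Real.sqrt_pos.mpr hpos) (Real.sq_sqrt hpos.le)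
  -- function equalities
  have hHeq : (fun p : ℝ × ℝ => (p.2 + Real.sqrt (p.2 ^ 2 + p.1)) / (2 * p.1)) = H16 := by
    funext p; simp [H16, S16]
  have hWeq : (fun p : ℝ × ℝ =>
      (p.2 ^ 3 + (Real.sqrt (p.2 ^ 2 + p.1)) ^ 3) / (12 * p.1)
        + p.2 / 4 * Real.log |p.2 + Real.sqrt (p.2 ^ 2 + p.1)|
        - (1 / 4) * Real.sqrt (p.2 ^ 2 + p.1)) = W16 := by
    funext p; simp [W16, S16, Real.log_abs]
  -- smoothness of S16 at points of Ω
  have hcdS : ∀ p ∈ Ω, ContDiffAt ℝ (⊤ : ℕ∞) S16 p := by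
    rintro p ⟨hx, hpos⟩
    exact (Real.contDiffAt_sqrt (ne_of_gt hpos)).comp p
      (((contDiff_snd.pow 2).add contDiff_fst).contDiffAt)
  have hcdH : ContDiffOn ℝ (⊤ : ℕ∞) H16 Ω := by
    intro p hp
    obtain ⟨hx, hpos⟩ := hp
    refine ContDiffAt.contDiffWithinAt ?_
    exact (contDiff_snd.contDiffAt.add (hcdS p ⟨hx, hpos⟩)).div
      ((contDiff_const.mul contDiff_fst).contDiffAt) (by simpa using hx)
  have hcdW : ContDiffOn ℝ (⊤ : ℕ∞) W16 Ω := by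
    intro p hp
    obtain ⟨hx, hpos⟩ := hp
    refine ContDiffAt.contDiffWithinAt ?_
    have hys : p.2 + S16 p ≠ 0 := by
      simpa [S16] using hne p hx hpos
    have h1 : ContDiffAt ℝ (⊤ : ℕ∞) (fun q : ℝ × ℝ => (q.2 ^ 3 + (S16 q) ^ 3) / (12 * q.1)) p :=
      ((contDiff_snd.pow 3).contDiffAt.add ((hcdS p ⟨hx, hpos⟩).pow 3)).div
        ((contDiff_const.mul contDiff_fst).contDiffAt) (by simpa using hx)
    have h2 : ContDiffAt ℝ (⊤ : ℕ∞) (fun q : ℝ × ℝ => q.2 / 4 * Real.log (q.2 + S16 q)) p := by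
      exact ((contDiff_snd.div_const 4).contDiffAt).mul
        (((Real.contDiffAt_log (n := ((⊤ : ℕ∞) : WithTop ℕ∞))).mpr hys).comp (g := Real.log) p (contDiff_snd.contDiffAt.add (hcdS p ⟨hx, hpos⟩)))
    exact (h1.add h2).sub (contDiffAt_const.mul (hcdS p ⟨hx, hpos⟩))
  -- eventual-equality transfer lemmas
  have hevy : ∀ f g : ℝ × ℝ → ℝ, (∀ q ∈ Ω, f q = g q) → ∀ p ∈ Ω, d2 f p = d2 g p := by
    intro f g hfg p hp
    apply Filter.EventuallyEq.deriv_eq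
    have hmem : ∀ᶠ t in 𝓝 p.2, (p.1, t) ∈ Ω :=
      (continuous_const.prodMk continuous_id).continuousAt.preimage_mem_nhds (hΩ.mem_nhds hp)
    filter_upwards [hmem] with t ht using hfg _ ht
  have hevx : ∀ f g : ℝ × ℝ → ℝ, (∀ q ∈ Ω, f q = g q) → ∀ p ∈ Ω, d1 f p = d1 g p := by
    intro f g hfg p hp
    apply Filter.EventuallyEq.deriv_eq
    have hmem : ∀ᶠ u in 𝓝 p.1, (u, p.2) ∈ Ω :=
      (continuous_id.prodMk continuous_const).continuousAt.preimage_mem_nhds (hΩ.mem_nhds hp)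
    filter_upwards [hmem] with u hu using hfg _ hu
  -- derivative identities on Ω
  have key2 : ∀ q ∈ Ω, d2 W16 q = V16 q := by
    rintro ⟨x, y⟩ ⟨hx, hpos⟩
    exact (lemA hx (Real.sqrt_pos.mpr hpos) (Real.sq_sqrt hpos.le)).deriv
  have key22 : ∀ q ∈ Ω, d2 (d2 W16) q = H16 q := by
    rintro ⟨x, y⟩ ⟨hx, hpos⟩
    rw [hevy (d2 W16) V16 key2 (x, y) ⟨hx, hpos⟩]
    exact (lemB hx (Real.sqrt_pos.mpr hpos) (Real.sq_sqrt hpos.le)).deriv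
  refine ⟨hne, ⟨?_, ?_⟩, ?_, ?_⟩
  · rw [hHeq]; exact hcdH
  · rintro ⟨x, y⟩ ⟨hx, hpos⟩
    rw [hHeq]
    have hs := Real.sqrt_pos.mpr hpos
    have hs2 := Real.sq_sqrt hpos.le
    rw [show d1 H16 (x, y) = _ from (lemD hx hs hs2).deriv,
      show d2 H16 (x, y) = _ from (lemC hx hs hs2).deriv]
    exact lemE hx hs hs2
  · rw [hWeq]; exact hcdW
  · rintro ⟨x, y⟩ ⟨hx, hpos⟩
    rw [hWeq]
    have hs := Real.sqrt_pos.mpr hpos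
    have hs2 := Real.sq_sqrt hpos.le
    have e1 : d1 (d2 (d2 W16)) (x, y) = 1 / (4 * x * Real.sqrt (y ^ 2 + x))
        - (y + Real.sqrt (y ^ 2 + x)) / (2 * x ^ 2) := by
      rw [hevx (d2 (d2 W16)) H16 key22 (x, y) ⟨hx, hpos⟩]
      exact (lemD hx hs hs2).deriv
    have e2 : d2 (d2 (d2 W16)) (x, y)
        = (y + Real.sqrt (y ^ 2 + x)) / (2 * x * Real.sqrt (y ^ 2 + x)) := by
      rw [hevy (d2 (d2 W16)) H16 key22 (x, y) ⟨hx, hpos⟩]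
      exact (lemC hx hs hs2).deriv
    rw [e1, e2, key22 (x, y) ⟨hx, hpos⟩]
    exact lemE hx hs hs2
end

section
/- Let Ω := {(z₁,z₂) ∈ ℝ² : z₂² < z₁² + 1} and write S := (z₁² + 1 − z₂²)^{1/2}. Then the function h(z₁,z₂) := (z₁z₂ + S)/(z₁² + 1) is a smooth solution of the inviscid Burgers equation ∂₁h + h·∂₂h = 0 on Ω, and the function w(z₁,z₂) := z₁z₂³/(6(z₁² + 1)) + (z₂/2)·arctan(z₂/S) + (1/6)(2 + z₂²/(z₁² + 1))·S is a smooth solution of the reduced equation ∂₁∂₂²w + (∂₂²w)·(∂₂³w) = 0 on Ω. -/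
open Real



open Real

private lemma sqrtDeriv {u : ℝ → ℝ} {u' t : ℝ} (hu : HasDerivAt u u' t) (ht : 0 < u t) :
    HasDerivAt (fun s => Real.sqrt (u s)) (u' / (2 * Real.sqrt (u t))) t := by
  have := (Real.hasDerivAt_sqrt (ne_of_gt ht)).comp t hu
  simpa [div_eq_mul_inv, mul_comm, Function.comp_def] using this

private lemma Spos {x y : ℝ} (h : y ^ 2 < x ^ 2 + 1) : 0 < Real.sqrt (x ^ 2 + 1 - y ^ 2) :=
  Real.sqrt_pos.2 (by linarith)

private lemma Ssq {x y : ℝ} (h : y ^ 2 < x ^ 2 + 1) :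
    Real.sqrt (x ^ 2 + 1 - y ^ 2) ^ 2 = x ^ 2 + 1 - y ^ 2 :=
  Real.sq_sqrt (by linarith)

/-- x-derivative of h -/
private lemma hD1 {x y : ℝ} (h : y ^ 2 < x ^ 2 + 1) :
    HasDerivAt (fun s => (s * y + Real.sqrt (s ^ 2 + 1 - y ^ 2)) / (s ^ 2 + 1))
      (((y + x / Real.sqrt (x ^ 2 + 1 - y ^ 2)) * (x ^ 2 + 1)
          - (x * y + Real.sqrt (x ^ 2 + 1 - y ^ 2)) * (2 * x)) / (x ^ 2 + 1) ^ 2) x := by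
  have hA : (0:ℝ) < x ^ 2 + 1 := by positivity
  have hS := Spos h
  have hu : HasDerivAt (fun s : ℝ => s ^ 2 + 1 - y ^ 2) (2 * x) x := by
    simpa using ((hasDerivAt_pow 2 x).add_const 1).sub_const (y ^ 2)
  have hsq := sqrtDeriv hu (by simpa using (by linarith : (0:ℝ) < x ^ 2 + 1 - y ^ 2))
  have hnum : HasDerivAt (fun s : ℝ => s * y + Real.sqrt (s ^ 2 + 1 - y ^ 2))
      (y + x / Real.sqrt (x ^ 2 + 1 - y ^ 2)) x := by
    have h1 : HasDerivAt (fun s : ℝ => s * y) y x := by simpa using (hasDerivAt_id x).mul_const y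
    have := h1.add hsq
    refine this.congr_deriv ?_
    field_simp
  have hden : HasDerivAt (fun s : ℝ => s ^ 2 + 1) (2 * x) x := by
    simpa using (hasDerivAt_pow 2 x).add_const 1
  exact hnum.div hden (ne_of_gt hA)

/-- y-derivative of h -/
private lemma hD2 {x y : ℝ} (h : y ^ 2 < x ^ 2 + 1) :
    HasDerivAt (fun t => (x * t + Real.sqrt (x ^ 2 + 1 - t ^ 2)) / (x ^ 2 + 1))
      ((x - y / Real.sqrt (x ^ 2 + 1 - y ^ 2)) / (x ^ 2 + 1)) y := by
  have hS := Spos h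
  have hu : HasDerivAt (fun t : ℝ => x ^ 2 + 1 - t ^ 2) (-(2 * y)) y := by
    simpa using (hasDerivAt_pow 2 y).const_sub (x ^ 2 + 1)
  have hsq := sqrtDeriv hu (by simpa using (by linarith : (0:ℝ) < x ^ 2 + 1 - y ^ 2))
  have h1 : HasDerivAt (fun t : ℝ => x * t) x y := by simpa using (hasDerivAt_id y).const_mul x
  have := (h1.add hsq).div_const (x ^ 2 + 1)
  refine this.congr_deriv ?_
  field_simp
  ring


/-- derivative of arctan(t / sqrt(x^2+1-t^2)) is 1/S -/
private lemma atanD {x y : ℝ} (h : y ^ 2 < x ^ 2 + 1) :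
    HasDerivAt (fun t => Real.arctan (t / Real.sqrt (x ^ 2 + 1 - t ^ 2)))
      (1 / Real.sqrt (x ^ 2 + 1 - y ^ 2)) y := by
  have hS := Spos h
  have hSsq := Ssq h
  have hu : HasDerivAt (fun t : ℝ => x ^ 2 + 1 - t ^ 2) (-(2 * y)) y := by
    simpa using (hasDerivAt_pow 2 y).const_sub (x ^ 2 + 1)
  have hsq := sqrtDeriv hu (by simpa using (by linarith : (0:ℝ) < x ^ 2 + 1 - y ^ 2))
  have hq : HasDerivAt (fun t => t / Real.sqrt (x ^ 2 + 1 - t ^ 2))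
      ((1 * Real.sqrt (x ^ 2 + 1 - y ^ 2) - y * (-(2 * y) / (2 * Real.sqrt (x ^ 2 + 1 - y ^ 2))))
        / Real.sqrt (x ^ 2 + 1 - y ^ 2) ^ 2) y :=
    (hasDerivAt_id y).div hsq (ne_of_gt hS)
  have := (Real.hasDerivAt_arctan (y / Real.sqrt (x ^ 2 + 1 - y ^ 2))).comp y hq
  refine this.congr_deriv ?_
  set S := Real.sqrt (x ^ 2 + 1 - y ^ 2) with hSdef
  field_simp
  ring

/-- y-derivative of w equals g -/
private lemma wD2 {x y : ℝ} (h : y ^ 2 < x ^ 2 + 1) :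
    HasDerivAt (fun t => x * t ^ 3 / (6 * (x ^ 2 + 1))
        + t / 2 * Real.arctan (t / Real.sqrt (x ^ 2 + 1 - t ^ 2))
        + (1 / 6) * (2 + t ^ 2 / (x ^ 2 + 1)) * Real.sqrt (x ^ 2 + 1 - t ^ 2))
      (x * y ^ 2 / (2 * (x ^ 2 + 1))
        + 1 / 2 * Real.arctan (y / Real.sqrt (x ^ 2 + 1 - y ^ 2))
        + y * Real.sqrt (x ^ 2 + 1 - y ^ 2) / (2 * (x ^ 2 + 1))) y := by
  have hA : (0:ℝ) < x ^ 2 + 1 := by positivity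
  have hS := Spos h
  have hSsq := Ssq h
  have hu : HasDerivAt (fun t : ℝ => x ^ 2 + 1 - t ^ 2) (-(2 * y)) y := by
    simpa using (hasDerivAt_pow 2 y).const_sub (x ^ 2 + 1)
  have hsq := sqrtDeriv hu (by simpa using (by linarith : (0:ℝ) < x ^ 2 + 1 - y ^ 2))
  have h1 : HasDerivAt (fun t : ℝ => x * t ^ 3 / (6 * (x ^ 2 + 1)))
      (x * (3 * y ^ 2) / (6 * (x ^ 2 + 1))) y := by
    have := ((hasDerivAt_pow 3 y).const_mul x).div_const (6 * (x ^ 2 + 1))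
    simpa using this
  have h2 : HasDerivAt (fun t : ℝ => t / 2 * Real.arctan (t / Real.sqrt (x ^ 2 + 1 - t ^ 2)))
      (1 / 2 * Real.arctan (y / Real.sqrt (x ^ 2 + 1 - y ^ 2))
        + y / 2 * (1 / Real.sqrt (x ^ 2 + 1 - y ^ 2))) y := by
    have ha := atanD h
    have hb : HasDerivAt (fun t : ℝ => t / 2) (1 / 2) y := by
      simpa using (hasDerivAt_id y).div_const 2
    simpa [Pi.mul_def] using hb.mul ha
  have h3 : HasDerivAt (fun t : ℝ => (1 / 6) * (2 + t ^ 2 / (x ^ 2 + 1)) * Real.sqrt (x ^ 2 + 1 - t ^ 2))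
      ((1 / 6) * (2 * y / (x ^ 2 + 1)) * Real.sqrt (x ^ 2 + 1 - y ^ 2)
        + (1 / 6) * (2 + y ^ 2 / (x ^ 2 + 1)) * (-(2 * y) / (2 * Real.sqrt (x ^ 2 + 1 - y ^ 2)))) y := by
    have hc : HasDerivAt (fun t : ℝ => (1 / 6) * (2 + t ^ 2 / (x ^ 2 + 1)))
        ((1 / 6) * (2 * y / (x ^ 2 + 1))) y := by
      have := (((hasDerivAt_pow 2 y).div_const (x ^ 2 + 1)).const_add 2).const_mul (1/6 : ℝ)
      simpa using this
    simpa [Pi.mul_def] using hc.mul hsq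
  have := (h1.add h2).add h3
  refine this.congr_deriv ?_
  set S := Real.sqrt (x ^ 2 + 1 - y ^ 2) with hSdef
  rw [show x ^ 2 + 1 = S ^ 2 + y ^ 2 by rw [hSsq]; ring]
  field_simp
  ring

/-- y-derivative of g equals h -/
private lemma gD2 {x y : ℝ} (h : y ^ 2 < x ^ 2 + 1) :
    HasDerivAt (fun t => x * t ^ 2 / (2 * (x ^ 2 + 1))
        + 1 / 2 * Real.arctan (t / Real.sqrt (x ^ 2 + 1 - t ^ 2))
        + t * Real.sqrt (x ^ 2 + 1 - t ^ 2) / (2 * (x ^ 2 + 1)))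
      ((x * y + Real.sqrt (x ^ 2 + 1 - y ^ 2)) / (x ^ 2 + 1)) y := by
  have hA : (0:ℝ) < x ^ 2 + 1 := by positivity
  have hS := Spos h
  have hSsq := Ssq h
  have hu : HasDerivAt (fun t : ℝ => x ^ 2 + 1 - t ^ 2) (-(2 * y)) y := by
    simpa using (hasDerivAt_pow 2 y).const_sub (x ^ 2 + 1)
  have hsq := sqrtDeriv hu (by simpa using (by linarith : (0:ℝ) < x ^ 2 + 1 - y ^ 2))
  have h1 : HasDerivAt (fun t : ℝ => x * t ^ 2 / (2 * (x ^ 2 + 1)))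
      (x * (2 * y) / (2 * (x ^ 2 + 1))) y := by
    have := ((hasDerivAt_pow 2 y).const_mul x).div_const (2 * (x ^ 2 + 1))
    simpa using this
  have h2 : HasDerivAt (fun t : ℝ => 1 / 2 * Real.arctan (t / Real.sqrt (x ^ 2 + 1 - t ^ 2)))
      (1 / 2 * (1 / Real.sqrt (x ^ 2 + 1 - y ^ 2))) y := (atanD h).const_mul (1/2 : ℝ)
  have h3 : HasDerivAt (fun t : ℝ => t * Real.sqrt (x ^ 2 + 1 - t ^ 2) / (2 * (x ^ 2 + 1)))
      ((1 * Real.sqrt (x ^ 2 + 1 - y ^ 2) + y * (-(2 * y) / (2 * Real.sqrt (x ^ 2 + 1 - y ^ 2))))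
        / (2 * (x ^ 2 + 1))) y := ((hasDerivAt_id y).mul hsq).div_const (2 * (x ^ 2 + 1))
  have := (h1.add h2).add h3
  refine this.congr_deriv ?_
  set S := Real.sqrt (x ^ 2 + 1 - y ^ 2) with hSdef
  rw [show x ^ 2 + 1 = S ^ 2 + y ^ 2 by rw [hSsq]; ring]
  field_simp
  ring

private lemma burgersAlg {x y : ℝ} (h : y ^ 2 < x ^ 2 + 1) :
    ((y + x / Real.sqrt (x ^ 2 + 1 - y ^ 2)) * (x ^ 2 + 1)
        - (x * y + Real.sqrt (x ^ 2 + 1 - y ^ 2)) * (2 * x)) / (x ^ 2 + 1) ^ 2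
      + (x * y + Real.sqrt (x ^ 2 + 1 - y ^ 2)) / (x ^ 2 + 1)
        * ((x - y / Real.sqrt (x ^ 2 + 1 - y ^ 2)) / (x ^ 2 + 1)) = 0 := by
  have hA : (0:ℝ) < x ^ 2 + 1 := by positivity
  have hS : 0 < Real.sqrt (x ^ 2 + 1 - y ^ 2) := Real.sqrt_pos.2 (by linarith)
  have hSsq : Real.sqrt (x ^ 2 + 1 - y ^ 2) ^ 2 = x ^ 2 + 1 - y ^ 2 := Real.sq_sqrt (by linarith)
  set S := Real.sqrt (x ^ 2 + 1 - y ^ 2) with hSdef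
  rw [show x ^ 2 + 1 = S ^ 2 + y ^ 2 by rw [hSsq]; ring]
  have hA' : (0:ℝ) < S ^ 2 + y ^ 2 := by positivity
  field_simp
  linear_combination (y * S) * hSsq

-- smoothness
private lemma sqrtSmooth {p : ℝ × ℝ} (hp : p.2 ^ 2 < p.1 ^ 2 + 1) :
    ContDiffAt ℝ (⊤ : ℕ∞) (fun q : ℝ × ℝ => Real.sqrt (q.1 ^ 2 + 1 - q.2 ^ 2)) p := by
  have hin : ContDiffAt ℝ (⊤ : ℕ∞) (fun q : ℝ × ℝ => q.1 ^ 2 + 1 - q.2 ^ 2) p :=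
    (((contDiff_fst.pow 2).add contDiff_const).sub (contDiff_snd.pow 2)).contDiffAt
  exact (Real.contDiffAt_sqrt (by simp; nlinarith)).comp p hin

private lemma hSmooth {p : ℝ × ℝ} (hp : p.2 ^ 2 < p.1 ^ 2 + 1) :
    ContDiffAt ℝ (⊤ : ℕ∞)
      (fun q : ℝ × ℝ => (q.1 * q.2 + Real.sqrt (q.1 ^ 2 + 1 - q.2 ^ 2)) / (q.1 ^ 2 + 1)) p := by
  have hA : (0:ℝ) < p.1 ^ 2 + 1 := by positivity
  exact ((contDiff_fst.mul contDiff_snd).contDiffAt.add (sqrtSmooth hp)).div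
    (((contDiff_fst.pow 2).add contDiff_const).contDiffAt) (ne_of_gt hA)

private lemma wSmooth {p : ℝ × ℝ} (hp : p.2 ^ 2 < p.1 ^ 2 + 1) :
    ContDiffAt ℝ (⊤ : ℕ∞)
      (fun q : ℝ × ℝ => q.1 * q.2 ^ 3 / (6 * (q.1 ^ 2 + 1))
          + q.2 / 2 * Real.arctan (q.2 / Real.sqrt (q.1 ^ 2 + 1 - q.2 ^ 2))
          + (1 / 6) * (2 + q.2 ^ 2 / (q.1 ^ 2 + 1)) * Real.sqrt (q.1 ^ 2 + 1 - q.2 ^ 2)) p := by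
  have hA : (0:ℝ) < p.1 ^ 2 + 1 := by positivity
  have hS : 0 < Real.sqrt (p.1 ^ 2 + 1 - p.2 ^ 2) := Real.sqrt_pos.2 (by nlinarith)
  have hAne : ContDiffAt ℝ (⊤ : ℕ∞) (fun q : ℝ × ℝ => 6 * (q.1 ^ 2 + 1)) p :=
    (contDiff_const.mul ((contDiff_fst.pow 2).add contDiff_const)).contDiffAt
  have h1 : ContDiffAt ℝ (⊤ : ℕ∞) (fun q : ℝ × ℝ => q.1 * q.2 ^ 3 / (6 * (q.1 ^ 2 + 1))) p :=
    ((contDiff_fst.mul (contDiff_snd.pow 3)).contDiffAt).div hAne (by positivity)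
  have h2 : ContDiffAt ℝ (⊤ : ℕ∞)
      (fun q : ℝ × ℝ => q.2 / 2 * Real.arctan (q.2 / Real.sqrt (q.1 ^ 2 + 1 - q.2 ^ 2))) p := by
    have harg : ContDiffAt ℝ (⊤ : ℕ∞)
        (fun q : ℝ × ℝ => q.2 / Real.sqrt (q.1 ^ 2 + 1 - q.2 ^ 2)) p :=
      (contDiff_snd.contDiffAt).div (sqrtSmooth hp) (ne_of_gt hS)
    exact ((contDiff_snd.div_const 2).contDiffAt).mul
      (Real.contDiff_arctan.contDiffAt.comp p harg)
  have h3 : ContDiffAt ℝ (⊤ : ℕ∞)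
      (fun q : ℝ × ℝ => (1 / 6) * (2 + q.2 ^ 2 / (q.1 ^ 2 + 1)) * Real.sqrt (q.1 ^ 2 + 1 - q.2 ^ 2)) p := by
    have : ContDiffAt ℝ (⊤ : ℕ∞) (fun q : ℝ × ℝ => (1 / 6 : ℝ) * (2 + q.2 ^ 2 / (q.1 ^ 2 + 1))) p :=
      contDiff_const.contDiffAt.mul (contDiff_const.contDiffAt.add
        ((contDiff_snd.pow 2).contDiffAt.div
          (((contDiff_fst.pow 2).add contDiff_const).contDiffAt) (ne_of_gt hA)))
    exact this.mul (sqrtSmooth hp)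
  exact (h1.add h2).add h3

-- ### Assembly

private lemma omegaOpen : IsOpen {p : ℝ × ℝ | p.2 ^ 2 < p.1 ^ 2 + 1} :=
  isOpen_lt (by fun_prop) (by fun_prop)

section main

private noncomputable def Hf : ℝ × ℝ → ℝ := fun p =>
  (p.1 * p.2 + Real.sqrt (p.1 ^ 2 + 1 - p.2 ^ 2)) / (p.1 ^ 2 + 1)

private noncomputable def Gf : ℝ × ℝ → ℝ := fun p =>
  p.1 * p.2 ^ 2 / (2 * (p.1 ^ 2 + 1))
    + 1 / 2 * Real.arctan (p.2 / Real.sqrt (p.1 ^ 2 + 1 - p.2 ^ 2))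
    + p.2 * Real.sqrt (p.1 ^ 2 + 1 - p.2 ^ 2) / (2 * (p.1 ^ 2 + 1))

private noncomputable def Wf : ℝ × ℝ → ℝ := fun p =>
  p.1 * p.2 ^ 3 / (6 * (p.1 ^ 2 + 1))
    + p.2 / 2 * Real.arctan (p.2 / Real.sqrt (p.1 ^ 2 + 1 - p.2 ^ 2))
    + (1 / 6) * (2 + p.2 ^ 2 / (p.1 ^ 2 + 1)) * Real.sqrt (p.1 ^ 2 + 1 - p.2 ^ 2)

private lemma d1_Hf {x y : ℝ} (h : y ^ 2 < x ^ 2 + 1) :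
    d1 Hf (x, y) = ((y + x / Real.sqrt (x ^ 2 + 1 - y ^ 2)) * (x ^ 2 + 1)
        - (x * y + Real.sqrt (x ^ 2 + 1 - y ^ 2)) * (2 * x)) / (x ^ 2 + 1) ^ 2 := by
  have := (hD1 h).deriv
  simpa [d1, Hf] using this

private lemma d2_Hf {x y : ℝ} (h : y ^ 2 < x ^ 2 + 1) :
    d2 Hf (x, y) = (x - y / Real.sqrt (x ^ 2 + 1 - y ^ 2)) / (x ^ 2 + 1) := by
  have := (hD2 h).deriv
  simpa [d2, Hf] using this

private lemma burgers_Hf : ∀ p ∈ {p : ℝ × ℝ | p.2 ^ 2 < p.1 ^ 2 + 1},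
    d1 Hf p + Hf p * d2 Hf p = 0 := by
  rintro ⟨x, y⟩ hp
  have h : y ^ 2 < x ^ 2 + 1 := hp
  rw [d1_Hf h, d2_Hf h, show Hf (x, y)
    = (x * y + Real.sqrt (x ^ 2 + 1 - y ^ 2)) / (x ^ 2 + 1) from rfl]
  exact burgersAlg h

private lemma d2_Wf {x y : ℝ} (h : y ^ 2 < x ^ 2 + 1) : d2 Wf (x, y) = Gf (x, y) := by
  have := (wD2 h).deriv
  simpa [d2, Wf, Gf] using this

private lemma slice2_mem {x y : ℝ} (h : y ^ 2 < x ^ 2 + 1) :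
    {t : ℝ | t ^ 2 < x ^ 2 + 1} ∈ nhds y := by
  have : IsOpen {t : ℝ | t ^ 2 < x ^ 2 + 1} := isOpen_lt (by fun_prop) (by fun_prop)
  exact this.mem_nhds h

private lemma slice1_mem {x y : ℝ} (h : y ^ 2 < x ^ 2 + 1) :
    {s : ℝ | y ^ 2 < s ^ 2 + 1} ∈ nhds x := by
  have : IsOpen {s : ℝ | y ^ 2 < s ^ 2 + 1} := isOpen_lt (by fun_prop) (by fun_prop)
  exact this.mem_nhds h

private lemma d22_Wf {x y : ℝ} (h : y ^ 2 < x ^ 2 + 1) :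
    d2 (d2 Wf) (x, y) = Hf (x, y) := by
  have heq : (fun t => d2 Wf ((x, y).1, t)) =ᶠ[nhds y] fun t => Gf (x, t) :=
    Filter.eventuallyEq_of_mem (slice2_mem h) (fun t ht => d2_Wf ht)
  have : d2 (d2 Wf) (x, y) = deriv (fun t => Gf (x, t)) y := heq.deriv_eq
  rw [this]
  have := (gD2 h).deriv
  simpa [Gf, Hf] using this

private lemma red_Wf : ∀ p ∈ {p : ℝ × ℝ | p.2 ^ 2 < p.1 ^ 2 + 1},
    d1 (d2 (d2 Wf)) p + d2 (d2 Wf) p * d2 (d2 (d2 Wf)) p = 0 := by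
  rintro ⟨x, y⟩ hp
  have h : y ^ 2 < x ^ 2 + 1 := hp
  have e1 : d1 (d2 (d2 Wf)) (x, y) = d1 Hf (x, y) := by
    have heq : (fun s => d2 (d2 Wf) (s, ((x : ℝ), y).2)) =ᶠ[nhds x] fun s => Hf (s, y) :=
      Filter.eventuallyEq_of_mem (slice1_mem h) (fun s hs => d22_Wf hs)
    exact heq.deriv_eq
  have e2 : d2 (d2 (d2 Wf)) (x, y) = d2 Hf (x, y) := by
    have heq : (fun t => d2 (d2 Wf) (((x : ℝ), y).1, t)) =ᶠ[nhds y] fun t => Hf (x, t) :=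
      Filter.eventuallyEq_of_mem (slice2_mem h) (fun t ht => d22_Wf ht)
    exact heq.deriv_eq
  rw [show d1 (d2 (d2 Wf)) (x, y) = d1 Hf (x, y) from e1, e2, d22_Wf h]
  exact burgers_Hf (x, y) hp

end main

/-- Solutions obtained by reduction 1.8⁰: the solution
`h = (z₁z₂ + √(z₁² + 1 − z₂²))/(z₁² + 1)` of the inviscid Burgers equation and the
corresponding solution `w` of the reduced equation on `Ω = {z₂² < z₁² + 1}`. -/
theorem statement17 :
    IsBurgersSolOn (fun p =>
        (p.1 * p.2 + Real.sqrt (p.1 ^ 2 + 1 - p.2 ^ 2)) / (p.1 ^ 2 + 1))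
      {p : ℝ × ℝ | p.2 ^ 2 < p.1 ^ 2 + 1} ∧
    IsRedSolOn (fun p =>
        p.1 * p.2 ^ 3 / (6 * (p.1 ^ 2 + 1))
          + p.2 / 2 * Real.arctan (p.2 / Real.sqrt (p.1 ^ 2 + 1 - p.2 ^ 2))
          + (1 / 6) * (2 + p.2 ^ 2 / (p.1 ^ 2 + 1)) * Real.sqrt (p.1 ^ 2 + 1 - p.2 ^ 2))
      {p : ℝ × ℝ | p.2 ^ 2 < p.1 ^ 2 + 1} := by
  constructor
  · exact ⟨fun p hp => (hSmooth hp).contDiffWithinAt, burgers_Hf⟩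
  · exact ⟨fun p hp => (wSmooth hp).contDiffWithinAt, red_Wf⟩
end

section
/- Let Ω ⊆ ℝ² be open and ζ : Ω → ℝ a smooth function satisfying ζ(z₁,z₂)·exp(ζ(z₁,z₂)) = exp(−z₁)·z₂ on Ω, with ζ ≠ 0 and ζ ≠ −1 everywhere on Ω (so ζ is a branch of the Lambert W function of e^{−z₁}z₂). Then the function h := −z₂/ζ is a smooth solution of the inviscid Burgers equation ∂₁h + h·∂₂h = 0 on Ω, and the function w := −z₂³·(18ζ² + 15ζ + 4)/(108ζ³) is a smooth solution of the reduced equation ∂₁∂₂²w + (∂₂²w)·(∂₂³w) = 0 on Ω. -/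
/-- Solutions obtained by reduction 1.4 in terms of a branch `ζ` of the
Lambert `W` function of `e^{−z₁}z₂`: `h = −z₂/ζ` solves the inviscid Burgers equation and
`w = −z₂³(18ζ² + 15ζ + 4)/(108ζ³)` solves the reduced equation on `Ω`. -/
theorem statement18 (Ω : Set (ℝ × ℝ)) (hΩ : IsOpen Ω)
    (ζ : ℝ × ℝ → ℝ) (hζ : ContDiffOn ℝ (⊤ : ℕ∞) ζ Ω)
    (hζW : ∀ p ∈ Ω, ζ p * Real.exp (ζ p) = Real.exp (-p.1) * p.2)
    (hζ0 : ∀ p ∈ Ω, ζ p ≠ 0) (hζ1 : ∀ p ∈ Ω, ζ p ≠ -1) :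
    IsBurgersSolOn (fun p => -p.2 / ζ p) Ω ∧
    IsRedSolOn (fun p =>
        -p.2 ^ 3 * (18 * (ζ p) ^ 2 + 15 * ζ p + 4) / (108 * (ζ p) ^ 3)) Ω := by
  -- basic nonvanishing facts
  have h1 : ∀ x y, (x, y) ∈ Ω → 1 + ζ (x, y) ≠ 0 := fun x y hp h => hζ1 _ hp (by linarith)
  have h0 : ∀ x y, (x, y) ∈ Ω → ζ (x, y) ≠ 0 := fun x y hp => hζ0 _ hp
  have hy : ∀ x y, (x, y) ∈ Ω → y ≠ 0 := by
    intro x y hp hy0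
    apply h0 x y hp
    have hW : ζ (x, y) * Real.exp (ζ (x, y)) = Real.exp (-x) * y := hζW _ hp
    have h2 : ζ (x, y) * Real.exp (ζ (x, y)) = 0 := by rw [hW, hy0, mul_zero]
    rcases mul_eq_zero.1 h2 with h | h
    · exact h
    · exact absurd h (Real.exp_ne_zero _)
  -- eventual membership along the coordinate lines
  have hmem1 : ∀ x y, (x, y) ∈ Ω → ∀ᶠ s in nhds x, (s, y) ∈ Ω := fun x y hp =>
    (continuous_id.prodMk continuous_const).continuousAt.preimage_mem_nhds
      (hΩ.mem_nhds hp)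
  have hmem2 : ∀ x y, (x, y) ∈ Ω → ∀ᶠ s in nhds y, (x, s) ∈ Ω := fun x y hp =>
    (continuous_const.prodMk continuous_id).continuousAt.preimage_mem_nhds
      (hΩ.mem_nhds hp)
  -- partial derivatives of ζ
  have hζd : ∀ x y, (x, y) ∈ Ω →
      HasDerivAt (fun s => ζ (s, y)) (-(ζ (x, y)) / (1 + ζ (x, y))) x ∧
      HasDerivAt (fun s => ζ (x, s)) (ζ (x, y) / (y * (1 + ζ (x, y)))) y := by
    intro x y hp
    have h1 := h1 x y hp
    have h0 := h0 x y hp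
    have hy := hy x y hp
    have hW : ζ (x, y) * Real.exp (ζ (x, y)) = Real.exp (-x) * y := hζW _ hp
    have he : Real.exp (ζ (x, y)) ≠ 0 := Real.exp_ne_zero _
    have hdζ : DifferentiableAt ℝ ζ (x, y) :=
      (hζ.contDiffAt (hΩ.mem_nhds hp)).differentiableAt (by simp)
    constructor
    · have hdiff : DifferentiableAt ℝ (fun s : ℝ => ζ (s, y)) x :=
        hdζ.comp x (differentiableAt_id.prodMk (differentiableAt_const y))
      have ha : HasDerivAt (fun s : ℝ => ζ (s, y)) (deriv (fun s : ℝ => ζ (s, y)) x) x :=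
        hdiff.hasDerivAt
      set a := deriv (fun s : ℝ => ζ (s, y)) x with hadef
      have hev : (fun s => Real.exp (-s) * y)
          =ᶠ[nhds x] (fun s => ζ (s, y) * Real.exp (ζ (s, y))) := by
        filter_upwards [hmem1 x y hp] with s hs using (hζW _ hs).symm
      have hF : HasDerivAt (fun s => ζ (s, y) * Real.exp (ζ (s, y)))
          (a * Real.exp (ζ (x, y)) + ζ (x, y) * (Real.exp (ζ (x, y)) * a)) x := ha.mul ha.exp
      have hG : HasDerivAt (fun s => Real.exp (-s) * y)
          (Real.exp (-x) * (-1) * y) x := ((hasDerivAt_neg x).exp).mul_const y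
      have heq := (hF.congr_of_eventuallyEq hev).unique hG
      have key : a * (1 + ζ (x, y)) = -ζ (x, y) := by
        apply mul_right_cancel₀ he
        linear_combination heq + hW
      have : a = -(ζ (x, y)) / (1 + ζ (x, y)) := (eq_div_iff h1).mpr key
      rw [← this]; exact ha
    · have hdiff : DifferentiableAt ℝ (fun s : ℝ => ζ (x, s)) y :=
        hdζ.comp y ((differentiableAt_const x).prodMk differentiableAt_id)
      have hb : HasDerivAt (fun s : ℝ => ζ (x, s)) (deriv (fun s : ℝ => ζ (x, s)) y) y :=
        hdiff.hasDerivAt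
      set b := deriv (fun s : ℝ => ζ (x, s)) y with hbdef
      have hev : (fun s : ℝ => Real.exp (-x) * s)
          =ᶠ[nhds y] (fun s => ζ (x, s) * Real.exp (ζ (x, s))) := by
        filter_upwards [hmem2 x y hp] with s hs using (hζW _ hs).symm
      have hF : HasDerivAt (fun s => ζ (x, s) * Real.exp (ζ (x, s)))
          (b * Real.exp (ζ (x, y)) + ζ (x, y) * (Real.exp (ζ (x, y)) * b)) y := hb.mul hb.exp
      have hG : HasDerivAt (fun s : ℝ => Real.exp (-x) * s) (Real.exp (-x)) y := by
        simpa using (hasDerivAt_id y).const_mul (Real.exp (-x))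
      have heq := (hF.congr_of_eventuallyEq hev).unique hG
      have key : b * (y * (1 + ζ (x, y))) = ζ (x, y) := by
        apply mul_right_cancel₀ he
        linear_combination y * heq - hW
      have : b = ζ (x, y) / (y * (1 + ζ (x, y))) := (eq_div_iff (mul_ne_zero hy h1)).mpr key
      rw [← this]; exact hb
  -- derivatives of h = -y/ζ
  have hd1h : ∀ x y, (x, y) ∈ Ω →
      HasDerivAt (fun s => -y / ζ (s, y)) (-y / (ζ (x, y) * (1 + ζ (x, y)))) x := by
    intro x y hp
    have := (hasDerivAt_const x (-y)).div (hζd x y hp).1 (h0 x y hp)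
    refine this.congr_deriv ?_
    have h0 := h0 x y hp; have h1 := h1 x y hp; have hy := hy x y hp
    have hA : ζ (x, y) + ζ (x, y) ^ 2 ≠ 0 := by
      intro hc; exact (mul_ne_zero h0 h1) (by linear_combination hc)
    field_simp [hA]
    try ring
  have hd2h : ∀ x y, (x, y) ∈ Ω →
      HasDerivAt (fun s => -s / ζ (x, s)) (-1 / (1 + ζ (x, y))) y := by
    intro x y hp
    have := ((hasDerivAt_id y).neg).div (hζd x y hp).2 (h0 x y hp)
    refine this.congr_deriv ?_
    simp only [Pi.mul_apply, Pi.add_apply, Pi.neg_apply, Pi.pow_apply, id_eq]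
    have h0 := h0 x y hp; have h1 := h1 x y hp; have hy := hy x y hp
    have hA : ζ (x, y) + ζ (x, y) ^ 2 ≠ 0 := by
      intro hc; exact (mul_ne_zero h0 h1) (by linear_combination hc)
    have hB : ζ (x, y) * y + y ≠ 0 := by
      intro hc; exact (mul_ne_zero hy h1) (by linear_combination hc)
    field_simp [hA, hB]
    try ring
  -- derivative of the w-slice in the second variable
  have hw2 : ∀ x y, (x, y) ∈ Ω →
      HasDerivAt (fun s => -s ^ 3 * (18 * ζ (x, s) ^ 2 + 15 * ζ (x, s) + 4) /
          (108 * ζ (x, s) ^ 3))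
        (-y ^ 2 * (2 * ζ (x, y) + 1) / (4 * ζ (x, y) ^ 2)) y := by
    intro x y hp
    have hb := (hζd x y hp).2
    have hN := ((hasDerivAt_pow 3 y).neg).mul
      ((((hasDerivAt_const y (18 : ℝ)).mul (hb.pow 2)).add
        ((hasDerivAt_const y (15 : ℝ)).mul hb)).add (hasDerivAt_const y (4 : ℝ)))
    have hD := (hasDerivAt_const y (108 : ℝ)).mul (hb.pow 3)
    have hne : 108 * ζ (x, y) ^ 3 ≠ 0 :=
      mul_ne_zero (by norm_num) (pow_ne_zero _ (h0 x y hp))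
    have := hN.div hD hne
    refine this.congr_deriv ?_
    simp only [Pi.mul_apply, Pi.add_apply, Pi.neg_apply, Pi.pow_apply, id_eq]
    have h0 := h0 x y hp; have h1 := h1 x y hp; have hy := hy x y hp
    have hA : ζ (x, y) + ζ (x, y) ^ 2 ≠ 0 := by
      intro hc; exact (mul_ne_zero h0 h1) (by linear_combination hc)
    have hB : ζ (x, y) * y + y ≠ 0 := by
      intro hc; exact (mul_ne_zero (hy) (h1)) (by linear_combination hc)
    push_cast
    field_simp [hA, hB]
    try ring
  -- derivative of the ∂₂w-slice in the second variable: it is h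
  have hw22 : ∀ x y, (x, y) ∈ Ω →
      HasDerivAt (fun s => -s ^ 2 * (2 * ζ (x, s) + 1) / (4 * ζ (x, s) ^ 2))
        (-y / ζ (x, y)) y := by
    intro x y hp
    have hb := (hζd x y hp).2
    have hN := ((hasDerivAt_pow 2 y).neg).mul
      (((hasDerivAt_const y (2 : ℝ)).mul hb).add (hasDerivAt_const y (1 : ℝ)))
    have hD := (hasDerivAt_const y (4 : ℝ)).mul (hb.pow 2)
    have hne : 4 * ζ (x, y) ^ 2 ≠ 0 :=
      mul_ne_zero (by norm_num) (pow_ne_zero _ (h0 x y hp))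
    have := hN.div hD hne
    refine this.congr_deriv ?_
    simp only [Pi.mul_apply, Pi.add_apply, Pi.neg_apply, Pi.pow_apply, id_eq]
    have h0 := h0 x y hp; have h1 := h1 x y hp; have hy := hy x y hp
    have hA : ζ (x, y) + ζ (x, y) ^ 2 ≠ 0 := by
      intro hc; exact (mul_ne_zero h0 h1) (by linear_combination hc)
    have hB : ζ (x, y) * y + y ≠ 0 := by
      intro hc; exact (mul_ne_zero (hy) (h1)) (by linear_combination hc)
    push_cast
    field_simp [hA, hB]
    try ring
  constructor
  · -- Burgers
    constructor
    · exact (contDiff_snd.neg.contDiffOn).div hζ hζ0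
    · rintro ⟨x, y⟩ hp
      have e1 : d1 (fun p : ℝ × ℝ => -p.2 / ζ p) (x, y)
          = -y / (ζ (x, y) * (1 + ζ (x, y))) := (hd1h x y hp).deriv
      have e2 : d2 (fun p : ℝ × ℝ => -p.2 / ζ p) (x, y)
          = -1 / (1 + ζ (x, y)) := (hd2h x y hp).deriv
      rw [e1, e2]
      have h0 := h0 x y hp; have h1 := h1 x y hp
      field_simp
      try ring
  · -- reduced equation
    set W : ℝ × ℝ → ℝ := fun p =>
      -p.2 ^ 3 * (18 * (ζ p) ^ 2 + 15 * ζ p + 4) / (108 * (ζ p) ^ 3) with hWdef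
    have hd2W : ∀ x y, (x, y) ∈ Ω →
        d2 W (x, y) = -y ^ 2 * (2 * ζ (x, y) + 1) / (4 * ζ (x, y) ^ 2) :=
      fun x y hp => (hw2 x y hp).deriv
    have hu : ∀ x y, (x, y) ∈ Ω → d2 (d2 W) (x, y) = -y / ζ (x, y) := by
      intro x y hp
      have hev : (fun s => d2 W (x, s))
          =ᶠ[nhds y] (fun s => -s ^ 2 * (2 * ζ (x, s) + 1) / (4 * ζ (x, s) ^ 2)) := by
        filter_upwards [hmem2 x y hp] with s hs using hd2W x s hs
      have : d2 (d2 W) (x, y) = deriv (fun s => d2 W (x, s)) y := rfl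
      rw [this, hev.deriv_eq]
      exact (hw22 x y hp).deriv
    constructor
    · apply ContDiffOn.div
      · exact ((contDiff_snd.pow 3).neg.contDiffOn).mul
          (((contDiffOn_const.mul (hζ.pow 2)).add
            (contDiffOn_const.mul hζ)).add contDiffOn_const)
      · exact contDiffOn_const.mul (hζ.pow 3)
      · exact fun p hp => mul_ne_zero (by norm_num) (pow_ne_zero _ (hζ0 p hp))
    · rintro ⟨x, y⟩ hp
      have e1 : d1 (d2 (d2 W)) (x, y) = -y / (ζ (x, y) * (1 + ζ (x, y))) := by
        have hev : (fun s => d2 (d2 W) (s, y)) =ᶠ[nhds x] (fun s => -y / ζ (s, y)) := by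
          filter_upwards [hmem1 x y hp] with s hs using hu s y hs
        have : d1 (d2 (d2 W)) (x, y) = deriv (fun s => d2 (d2 W) (s, y)) x := rfl
        rw [this, hev.deriv_eq]
        exact (hd1h x y hp).deriv
      have e3 : d2 (d2 (d2 W)) (x, y) = -1 / (1 + ζ (x, y)) := by
        have hev : (fun s => d2 (d2 W) (x, s)) =ᶠ[nhds y] (fun s => -s / ζ (x, s)) := by
          filter_upwards [hmem2 x y hp] with s hs using hu x s hs
        have : d2 (d2 (d2 W)) (x, y) = deriv (fun s => d2 (d2 W) (x, s)) y := rfl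
        rw [this, hev.deriv_eq]
        exact (hd2h x y hp).deriv
      rw [e1, e3, hu x y hp]
      have h0 := h0 x y hp; have h1 := h1 x y hp
      field_simp
      try ring
end

section
/- Let Ω ⊆ {(z₁,z₂) ∈ ℝ² : z₁ ≠ 0} be open and ζ : Ω → ℝ a smooth function satisfying ζ(z₁,z₂)·exp(ζ(z₁,z₂)) = exp(z₂/z₁)/z₁ on Ω, with ζ ≠ 0 and ζ ≠ −1 everywhere on Ω (so ζ is a branch of the Lambert W function of e^{z₂/z₁}/z₁). Then the function h := z₂/z₁ − ζ is a smooth solution of the inviscid Burgers equation ∂₁h + h·∂₂h = 0 on Ω, and the function w := z₂³/(6z₁) − (z₁²/2)·(ζ³/3 + (3/2)ζ² + 2ζ) is a smooth solution of the reduced equation ∂₁∂₂²w + (∂₂²w)·(∂₂³w) = 0 on Ω. -/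
section Aux

lemma zeta_deriv (Ω : Set (ℝ × ℝ)) (hΩ : IsOpen Ω) (hΩ1 : ∀ p ∈ Ω, p.1 ≠ 0)
    (ζ : ℝ × ℝ → ℝ) (hζ : ContDiffOn ℝ (⊤ : ℕ∞) ζ Ω)
    (hζW : ∀ p ∈ Ω, ζ p * Real.exp (ζ p) = Real.exp (p.2 / p.1) / p.1)
    (hζ1 : ∀ p ∈ Ω, ζ p ≠ -1) (p : ℝ × ℝ) (hp : p ∈ Ω) :
    HasDerivAt (fun s => ζ (s, p.2)) (-(ζ p) * (p.2 / p.1 ^ 2 + 1 / p.1) / (1 + ζ p)) p.1 ∧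
    HasDerivAt (fun t => ζ (p.1, t)) (ζ p / ((1 + ζ p) * p.1)) p.2 := by
  have hp1 := hΩ1 p hp
  have h1ζ : (1 : ℝ) + ζ p ≠ 0 := by
    have := hζ1 p hp; intro h; apply this; linarith
  have hE : Real.exp (ζ p) ≠ 0 := Real.exp_ne_zero _
  have hd : DifferentiableAt ℝ ζ p :=
    (hζ.contDiffAt (hΩ.mem_nhds hp)).differentiableAt (by simp)
  have hexp : Real.exp (p.2 / p.1) = ζ p * Real.exp (ζ p) * p.1 := by
    have := hζW p hp; field_simp at this; linarith
  constructor
  · have ha : HasDerivAt (fun s => ζ (s, p.2)) (fderiv ℝ ζ p (1, 0)) p.1 :=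
      hd.hasFDerivAt.comp_hasDerivAt p.1 (HasDerivAt.prodMk (hasDerivAt_id p.1) (hasDerivAt_const p.1 p.2))
    set a := fderiv ℝ ζ p (1, 0) with ha'
    have hF : HasDerivAt (fun s => ζ (s, p.2) * Real.exp (ζ (s, p.2)))
        (a * Real.exp (ζ p) + ζ p * (Real.exp (ζ p) * a)) p.1 := ha.mul ha.exp
    have hG : HasDerivAt (fun s => Real.exp (p.2 / s) / s)
        (((Real.exp (p.2 / p.1) * ((0 * p.1 - p.2 * 1) / p.1 ^ 2)) * p.1
          - Real.exp (p.2 / p.1) * 1) / p.1 ^ 2) p.1 :=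
      (((hasDerivAt_const p.1 p.2).div (hasDerivAt_id p.1) hp1).exp).div (hasDerivAt_id p.1) hp1
    have heq : (fun s => ζ (s, p.2) * Real.exp (ζ (s, p.2)))
        =ᶠ[nhds p.1] fun s => Real.exp (p.2 / s) / s := by
      have hcont : Continuous fun s : ℝ => ((s, p.2) : ℝ × ℝ) := continuous_id.prodMk continuous_const
      filter_upwards [(hcont.tendsto p.1).eventually (hΩ.eventually_mem hp)] with s hs
      exact hζW _ hs
    have hEq := hF.unique (hG.congr_of_eventuallyEq heq)
    have haval : a = -(ζ p) * (p.2 / p.1 ^ 2 + 1 / p.1) / (1 + ζ p) := by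
      rw [hexp] at hEq
      field_simp at hEq
      have h2 : (a * ((1 + ζ p) * p.1 ^ 2 * p.1) + ζ p * (p.2 * p.1 + p.1 ^ 2))
          * (Real.exp (ζ p) * p.1) = 0 * (Real.exp (ζ p) * p.1) := by linear_combination (Real.exp (ζ p) * p.1 ^ 2) * hEq
      have h3 := mul_right_cancel₀ (mul_ne_zero hE hp1) h2
      field_simp
      linear_combination hEq
    exact haval ▸ ha
  · have hb : HasDerivAt (fun t => ζ (p.1, t)) (fderiv ℝ ζ p (0, 1)) p.2 :=
      hd.hasFDerivAt.comp_hasDerivAt p.2 (HasDerivAt.prodMk (hasDerivAt_const p.2 p.1) (hasDerivAt_id p.2))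
    set b := fderiv ℝ ζ p (0, 1) with hb'
    have hF : HasDerivAt (fun t => ζ (p.1, t) * Real.exp (ζ (p.1, t)))
        (b * Real.exp (ζ p) + ζ p * (Real.exp (ζ p) * b)) p.2 := hb.mul hb.exp
    have hG : HasDerivAt (fun t => Real.exp (t / p.1) / p.1)
        (Real.exp (p.2 / p.1) * (1 / p.1) / p.1) p.2 :=
      (((hasDerivAt_id p.2).div_const p.1).exp).div_const p.1
    have heq : (fun t => ζ (p.1, t) * Real.exp (ζ (p.1, t)))
        =ᶠ[nhds p.2] fun t => Real.exp (t / p.1) / p.1 := by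
      have hcont : Continuous fun t : ℝ => ((p.1, t) : ℝ × ℝ) := continuous_const.prodMk continuous_id
      filter_upwards [(hcont.tendsto p.2).eventually (hΩ.eventually_mem hp)] with t ht
      exact hζW _ ht
    have hEq := hF.unique (hG.congr_of_eventuallyEq heq)
    have hbval : b = ζ p / ((1 + ζ p) * p.1) := by
      rw [hexp] at hEq
      field_simp at hEq
      have h2 : (b * ((1 + ζ p) * p.1) - ζ p) * Real.exp (ζ p) = 0 * Real.exp (ζ p) := by
        linear_combination Real.exp (ζ p) * hEq
      have h3 := mul_right_cancel₀ hE h2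
      field_simp
      linear_combination h3
    exact hbval ▸ hb

end Aux

set_option maxHeartbeats 1000000 in
/-- Solutions obtained by reduction 1.7 in terms of a branch `ζ` of the
Lambert `W` function of `e^{z₂/z₁}/z₁`: `h = z₂/z₁ − ζ` solves the inviscid Burgers
equation and `w = z₂³/(6z₁) − (z₁²/2)(ζ³/3 + (3/2)ζ² + 2ζ)` solves the reduced equation. -/
theorem statement19 (Ω : Set (ℝ × ℝ)) (hΩ : IsOpen Ω) (hΩ1 : ∀ p ∈ Ω, p.1 ≠ 0)
    (ζ : ℝ × ℝ → ℝ) (hζ : ContDiffOn ℝ (⊤ : ℕ∞) ζ Ω)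
    (hζW : ∀ p ∈ Ω, ζ p * Real.exp (ζ p) = Real.exp (p.2 / p.1) / p.1)
    (hζ0 : ∀ p ∈ Ω, ζ p ≠ 0) (hζ1 : ∀ p ∈ Ω, ζ p ≠ -1) :
    IsBurgersSolOn (fun p => p.2 / p.1 - ζ p) Ω ∧
    IsRedSolOn (fun p =>
        p.2 ^ 3 / (6 * p.1)
          - p.1 ^ 2 / 2 * ((ζ p) ^ 3 / 3 + (3 / 2) * (ζ p) ^ 2 + 2 * ζ p)) Ω := by
  set h : ℝ × ℝ → ℝ := fun p => p.2 / p.1 - ζ p with hh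
  set w : ℝ × ℝ → ℝ := fun p =>
    p.2 ^ 3 / (6 * p.1) - p.1 ^ 2 / 2 * ((ζ p) ^ 3 / 3 + (3 / 2) * (ζ p) ^ 2 + 2 * ζ p) with hw
  -- basic facts available at each point
  have h1ζ : ∀ p ∈ Ω, (1 : ℝ) + ζ p ≠ 0 := by
    intro p hp; have := hζ1 p hp; intro hc; apply this; linarith
  -- the Burgers PDE for h
  have hpde : ∀ p ∈ Ω, d1 h p + h p * d2 h p = 0 := by
    intro p hp
    have hp1 := hΩ1 p hp
    have h1 := h1ζ p hp
    obtain ⟨hA, hB⟩ := zeta_deriv Ω hΩ hΩ1 ζ hζ hζW hζ1 p hp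
    have hd1 : HasDerivAt (fun s => h (s, p.2))
        ((0 * p.1 - p.2 * 1) / p.1 ^ 2 - -(ζ p) * (p.2 / p.1 ^ 2 + 1 / p.1) / (1 + ζ p)) p.1 :=
      ((hasDerivAt_const p.1 p.2).div (hasDerivAt_id p.1) hp1).sub hA
    have hd2 : HasDerivAt (fun t => h (p.1, t))
        (1 / p.1 - ζ p / ((1 + ζ p) * p.1)) p.2 :=
      ((hasDerivAt_id p.2).div_const p.1).sub hB
    have e1 : d1 h p = (0 * p.1 - p.2 * 1) / p.1 ^ 2
        - -(ζ p) * (p.2 / p.1 ^ 2 + 1 / p.1) / (1 + ζ p) := hd1.deriv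
    have e2 : d2 h p = 1 / p.1 - ζ p / ((1 + ζ p) * p.1) := hd2.deriv
    rw [e1, e2]
    show (0 * p.1 - p.2 * 1) / p.1 ^ 2 - -(ζ p) * (p.2 / p.1 ^ 2 + 1 / p.1) / (1 + ζ p)
      + (p.2 / p.1 - ζ p) * (1 / p.1 - ζ p / ((1 + ζ p) * p.1)) = 0
    field_simp
    ring
  -- smoothness of h
  have hsm : ContDiffOn ℝ (⊤ : ℕ∞) h Ω :=
    (ContDiffOn.div contDiff_snd.contDiffOn contDiff_fst.contDiffOn hΩ1).sub hζ
  -- smoothness of w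
  have hwsm : ContDiffOn ℝ (⊤ : ℕ∞) w Ω := by
    refine ContDiffOn.sub
      (ContDiffOn.div (contDiff_snd.pow 3).contDiffOn
        (contDiff_const.mul contDiff_fst).contDiffOn
        (fun p hp => mul_ne_zero (by norm_num) (hΩ1 p hp)))
      (ContDiffOn.mul ((contDiff_fst.pow 2).contDiffOn.div_const 2)
        ((((hζ.pow 3).div_const 3).add (contDiffOn_const.mul (hζ.pow 2))).add
          (contDiffOn_const.mul hζ)))
  -- d2 w = g1 on Ω
  set g1 : ℝ × ℝ → ℝ := fun p => p.2 ^ 2 / (2 * p.1) - p.1 / 2 * (ζ p * (ζ p + 2)) with hg1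
  have hd2w : ∀ p ∈ Ω, d2 w p = g1 p := by
    intro p hp
    have hp1 := hΩ1 p hp
    have h1 := h1ζ p hp
    obtain ⟨-, hB⟩ := zeta_deriv Ω hΩ hΩ1 ζ hζ hζW hζ1 p hp
    have hfull : HasDerivAt (fun t => w (p.1, t))
        ((3 : ℕ) * p.2 ^ (3 - 1) / (6 * p.1)
          - p.1 ^ 2 / 2 * (((3 : ℕ) * ζ p ^ (3 - 1) * (ζ p / ((1 + ζ p) * p.1)) / 3
              + 3 / 2 * ((2 : ℕ) * ζ p ^ (2 - 1) * (ζ p / ((1 + ζ p) * p.1))))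
            + 2 * (ζ p / ((1 + ζ p) * p.1)))) p.2 :=
      ((hasDerivAt_pow 3 p.2).div_const (6 * p.1)).sub
        (HasDerivAt.const_mul (p.1 ^ 2 / 2)
          ((((hB.pow 3).div_const 3).add (HasDerivAt.const_mul (3 / 2) (hB.pow 2))).add
            (HasDerivAt.const_mul 2 hB)))
    have := hfull.deriv
    show deriv (fun t => w (p.1, t)) p.2 = g1 p
    rw [this]
    show (3 : ℕ) * p.2 ^ (3 - 1) / (6 * p.1)
          - p.1 ^ 2 / 2 * (((3 : ℕ) * ζ p ^ (3 - 1) * (ζ p / ((1 + ζ p) * p.1)) / 3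
              + 3 / 2 * ((2 : ℕ) * ζ p ^ (2 - 1) * (ζ p / ((1 + ζ p) * p.1))))
            + 2 * (ζ p / ((1 + ζ p) * p.1)))
        = p.2 ^ 2 / (2 * p.1) - p.1 / 2 * (ζ p * (ζ p + 2))
    push_cast
    field_simp
    ring
  -- d2 (d2 w) = h on Ω
  have hd2d2 : ∀ p ∈ Ω, d2 (d2 w) p = h p := by
    intro p hp
    have hp1 := hΩ1 p hp
    have h1 := h1ζ p hp
    obtain ⟨-, hB⟩ := zeta_deriv Ω hΩ hΩ1 ζ hζ hζW hζ1 p hp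
    have hcont : Continuous fun t : ℝ => ((p.1, t) : ℝ × ℝ) := continuous_const.prodMk continuous_id
    have heq : (fun t => d2 w (p.1, t)) =ᶠ[nhds p.2] fun t => g1 (p.1, t) := by
      filter_upwards [(hcont.tendsto p.2).eventually (hΩ.eventually_mem hp)] with t ht
      exact hd2w _ ht
    have hg : HasDerivAt (fun t => g1 (p.1, t))
        ((2 : ℕ) * p.2 ^ (2 - 1) / (2 * p.1)
          - p.1 / 2 * ((ζ p / ((1 + ζ p) * p.1)) * (ζ p + 2)
            + ζ p * (ζ p / ((1 + ζ p) * p.1)))) p.2 :=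
      ((hasDerivAt_pow 2 p.2).div_const (2 * p.1)).sub
        (HasDerivAt.const_mul (p.1 / 2) (hB.mul (hB.add_const 2)))
    show deriv (fun t => d2 w (p.1, t)) p.2 = h p
    rw [heq.deriv_eq, hg.deriv]
    show (2 : ℕ) * p.2 ^ (2 - 1) / (2 * p.1)
          - p.1 / 2 * ((ζ p / ((1 + ζ p) * p.1)) * (ζ p + 2)
            + ζ p * (ζ p / ((1 + ζ p) * p.1))) = p.2 / p.1 - ζ p
    push_cast
    field_simp
    ring
  refine ⟨⟨hsm, hpde⟩, hwsm, ?_⟩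
  intro p hp
  have hp1 := hΩ1 p hp
  have hcont1 : Continuous fun s : ℝ => ((s, p.2) : ℝ × ℝ) := continuous_id.prodMk continuous_const
  have hcont2 : Continuous fun t : ℝ => ((p.1, t) : ℝ × ℝ) := continuous_const.prodMk continuous_id
  have he1 : (fun s => d2 (d2 w) (s, p.2)) =ᶠ[nhds p.1] fun s => h (s, p.2) := by
    filter_upwards [(hcont1.tendsto p.1).eventually (hΩ.eventually_mem hp)] with s hs
    exact hd2d2 _ hs
  have he2 : (fun t => d2 (d2 w) (p.1, t)) =ᶠ[nhds p.2] fun t => h (p.1, t) := by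
    filter_upwards [(hcont2.tendsto p.2).eventually (hΩ.eventually_mem hp)] with t ht
    exact hd2d2 _ ht
  have e1 : d1 (d2 (d2 w)) p = d1 h p := he1.deriv_eq
  have e2 : d2 (d2 (d2 w)) p = d2 h p := he2.deriv_eq
  have e3 : d2 (d2 w) p = h p := hd2d2 p hp
  rw [show d1 (d2 (d2 w)) p + d2 (d2 w) p * d2 (d2 (d2 w)) p
      = d1 h p + h p * d2 h p by rw [e1, e2, e3]]
  exact hpde p hp
end
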